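/- Let J ⊂ K[x_1,...,x_n] be an almost revlex ideal with R/J of Krull dimension δ. Then for every j with n-δ+2 ≤ j ≤ n, the variable x_j is not a zero-divisor on R/J. -/

import Mathlib

open Finset

/-- Total degree of a monomial (exponent vector). -/
def mdeg {n : ℕ} (α : Fin n →₀ ℕ) : ℕ := α.sum fun _ e => e

/-- A set of exponent vectors is the set of monomials of a monomial ideal. -/
def IsMonIdeal {n : ℕ} (S : Set (Fin n →₀ ℕ)) : Prop :=
  ∀ α ∈ S, ∀ β : Fin n →₀ ℕ, α + β ∈ S

/-- `α` is a minimal monomial generator of the monomial ideal with monomials `S`. -/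
def MinGen {n : ℕ} (S : Set (Fin n →₀ ℕ)) (α : Fin n →₀ ℕ) : Prop :=
  α ∈ S ∧ ∀ β ∈ S, β ≤ α → β = α

/-- Stable monomial ideal (variables ordered `x_1 ≻ ⋯ ≻ x_n`, i.e. index `0` largest). -/
def IsStable {n : ℕ} (S : Set (Fin n →₀ ℕ)) : Prop :=
  ∀ α ∈ S, ∀ m ∈ α.support, (∀ k ∈ α.support, k ≤ m) →
    ∀ i : Fin n, i < m → α - Finsupp.single m 1 + Finsupp.single i 1 ∈ S

def IsStronglyStable {n : ℕ} (S : Set (Fin n →₀ ℕ)) : Prop :=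
  ∀ α ∈ S, ∀ i ∈ α.support, ∀ j : Fin n, j < i →
    α - Finsupp.single i 1 + Finsupp.single j 1 ∈ S

/-- `drlLT α β` : `α` is smaller than `β` in degrevlex with `x_1 ≻ ⋯ ≻ x_n`. -/
def drlLT {n : ℕ} (α β : Fin n →₀ ℕ) : Prop :=
  mdeg α < mdeg β ∨ (mdeg α = mdeg β ∧ ∃ i : Fin n, β i < α i ∧ ∀ j : Fin n, i < j → α j = β j)

def IsAlmostRevLex {n : ℕ} (S : Set (Fin n →₀ ℕ)) : Prop :=
  IsMonIdeal S ∧ ∀ α, MinGen S α → ∀ β : Fin n →₀ ℕ, mdeg β = mdeg α → drlLT α β → β ∈ S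

/-- Combinatorial Hilbert function of `R/J`: number of degree-`t` monomials outside `S`. -/
noncomputable def hilbC {n : ℕ} (S : Set (Fin n →₀ ℕ)) (t : ℕ) : ℕ :=
  {α : Fin n →₀ ℕ | mdeg α = t ∧ α ∉ S}.ncard

/-- `fdiff H s t` is `Δ^s H (t)` with the convention `Δ^s H (0) = 1` for `s ≥ 1`. -/
def fdiff (H : ℕ → ℕ) : ℕ → ℕ → ℤ
  | 0, t => H t
  | _+1, 0 => 1
  | s+1, t+1 => fdiff H s (t+1) - fdiff H s t

open MvPolynomial

/-! ### Auxiliary results on Krull dimension of finitely generated algebras -/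

universe u

section AlgIndepAux

variable {K : Type*} [Field K]

/-- Lifting algebraic independence through a quotient of a domain, adding one
element of the kernel. -/
theorem ARL.algIndep_option {A B : Type u} [CommRing A] [IsDomain A] [Algebra K A] [CommRing B]
    [Algebra K B] (φ : A →ₐ[K] B) {t : ℕ} (w : Fin t → A)
    (hw : AlgebraicIndependent K (⇑φ ∘ w)) (f : A) (hf0 : f ≠ 0) (hfφ : φ f = 0) :
    AlgebraicIndependent K (fun o : Option (Fin t) => o.elim f w) := by
  have hw' : AlgebraicIndependent K w := AlgebraicIndependent.of_comp φ hw
  rw [hw'.option_iff_transcendental f, transcendental_iff]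
  set R₀ := Algebra.adjoin K (Set.range w) with hR₀
  have hinj : ∀ c : R₀, φ c.1 = 0 → c = 0 := by
    intro c hc
    have hcmem : c.1 ∈ (aeval (R := K) w).range := by
      rw [← Algebra.adjoin_range_eq_range_aeval]; exact c.2
    obtain ⟨pc, hpc⟩ := hcmem
    have h1 : aeval (⇑φ ∘ w) pc = 0 := by
      have : (aeval (⇑φ ∘ w)) pc = φ (aeval w pc) := by
        rw [MvPolynomial.comp_aeval_apply (f := w) φ pc]; rfl
      rw [this]
      have : aeval w pc = c.1 := hpc
      rw [this, hc]
    have hpc0 : pc = 0 := by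
      have h2 := algebraicIndependent_iff_injective_aeval.mp hw
      have : aeval (R := K) (⇑φ ∘ w) pc = aeval (R := K) (⇑φ ∘ w) 0 := by rw [h1, map_zero]
      exact h2 this
    have : c.1 = 0 := by rw [← hpc, hpc0, map_zero]
    exact Subtype.ext this
  have hc0 : ∀ p : Polynomial R₀, Polynomial.aeval f p = 0 → p.coeff 0 = 0 := by
    intro p hp
    apply hinj
    have h1 : φ (Polynomial.aeval f p) = 0 := by rw [hp, map_zero]
    rw [Polynomial.aeval_eq_sum_range, map_sum] at h1
    have h2 : ∀ i ∈ Finset.range (p.natDegree + 1),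
        φ (p.coeff i • f ^ i) = if i = 0 then φ ((p.coeff 0 : A)) else 0 := by
      intro i _
      rcases Nat.eq_zero_or_pos i with h | h
      · subst h; simp [Subalgebra.smul_def, smul_eq_mul]
      · have : i ≠ 0 := Nat.pos_iff_ne_zero.mp h
        simp only [this, if_false, Subalgebra.smul_def, smul_eq_mul, map_mul, map_pow, hfφ,
          zero_pow this, mul_zero]
    rw [Finset.sum_congr rfl h2] at h1
    simpa using h1
  intro p hp
  by_contra hpne
  obtain ⟨m, hm⟩ : ∃ m, p.natDegree ≤ m := ⟨p.natDegree, le_rfl⟩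
  induction m generalizing p with
  | zero =>
    have : p = Polynomial.C (p.coeff 0) := Polynomial.eq_C_of_natDegree_le_zero hm
    rw [hc0 p hp] at this
    exact hpne (by rw [this, map_zero])
  | succ m ih =>
    have hx : Polynomial.X ∣ p := Polynomial.X_dvd_iff.mpr (hc0 p hp)
    obtain ⟨q, hq⟩ := hx
    have hq0 : q ≠ 0 := by rintro rfl; exact hpne (by rw [hq, mul_zero])
    have haq : Polynomial.aeval f q = 0 := by
      have : f * Polynomial.aeval f q = 0 := by
        rw [← hp, hq, map_mul, Polynomial.aeval_X]
      rcases mul_eq_zero.mp this with h | h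
      · exact absurd h hf0
      · exact h
    have hdeg : q.natDegree ≤ m := by
      have : p.natDegree = q.natDegree + 1 := by
        rw [hq, Polynomial.natDegree_X_mul hq0]
      omega
    exact ih q haq hq0 hdeg

/-- auxiliary: a coordinate is at most the total degree of a finsupp. -/
theorem ARL.apply_le_fsum {k : ℕ} (β : Fin k →₀ ℕ) (i : Fin k) : β i ≤ β.sum fun _ e => e := by
  rcases eq_or_ne (β i) 0 with h | h
  · simp [h]
  · exact Finset.single_le_sum (f := fun a => β a) (fun _ _ => Nat.zero_le _)
      (Finsupp.mem_support_iff.mpr h)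

/-- In an algebra generated by `N` elements there is no algebraically independent family of
`N+1` elements. -/
theorem ARL.not_algIndep_succ {A : Type u} [CommRing A] [Algebra K A] {N : ℕ}
    (v : Fin N → A) (hv : Algebra.adjoin K (Set.range v) = ⊤)
    (w : Fin (N + 1) → A) (hw : AlgebraicIndependent K w) : False := by
  classical
  have hmem : ∀ i, w i ∈ (aeval (R := K) v).range := by
    intro i; rw [← Algebra.adjoin_range_eq_range_aeval, hv]; trivial
  choose g hg0 using hmem
  have hg : ∀ i, aeval (R := K) v (g i) = w i := fun i => hg0 i
  set d := Finset.univ.sup fun i => (g i).totalDegree with hd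
  set Cn := (N + 1) * d + 1 with hC
  set M := Cn ^ N with hM
  set D := (N + 1) * (M * d) with hD
  set G : Finset A := Finset.image
    (fun b : Fin N → Fin (D + 1) =>
      aeval v (monomial (Finsupp.equivFunOnFinite.symm fun i => (b i : ℕ)) (1 : K)))
    Finset.univ with hG
  have key : ∀ h : MvPolynomial (Fin N) K, h.totalDegree ≤ D →
      aeval v h ∈ Submodule.span K (G : Set A) := by
    intro h hh
    rw [h.as_sum, map_sum]
    apply Submodule.sum_mem
    intro β hβ
    have h1 : monomial β (coeff β h) = MvPolynomial.C (coeff β h) * monomial β 1 := by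
      rw [C_mul_monomial, mul_one]
    rw [h1, map_mul, aeval_C, ← Algebra.smul_def]
    apply Submodule.smul_mem
    apply Submodule.subset_span
    have hβD : ∀ i, β i < D + 1 := by
      intro i
      have h2 := ARL.apply_le_fsum β i
      have h3 := MvPolynomial.le_totalDegree hβ
      omega
    refine Finset.mem_coe.mpr (Finset.mem_image.mpr ⟨fun i => ⟨β i, hβD i⟩, Finset.mem_univ _, ?_⟩)
    have hEq : (Finsupp.equivFunOnFinite.symm fun i => (((⟨β i, hβD i⟩ : Fin (D + 1))) : ℕ)) = β := by
      rw [Equiv.symm_apply_eq]; rfl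
    simp only [hEq]
  set F : (Fin (N + 1) → Fin (M + 1)) → A := fun e =>
    aeval w (monomial (Finsupp.equivFunOnFinite.symm fun i => (e i : ℕ)) (1 : K)) with hF
  have hFmem : ∀ e, F e ∈ Submodule.span K (G : Set A) := by
    intro e
    have h1 : F e = aeval v (∏ j, g j ^ (e j : ℕ)) := by
      rw [hF]
      simp only
      rw [aeval_monomial, map_one, one_mul,
        Finsupp.prod_fintype _ _ (fun i => pow_zero (w i))]
      simp only [Finsupp.coe_equivFunOnFinite_symm]
      rw [map_prod]
      refine Finset.prod_congr rfl fun j _ => ?_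
      rw [map_pow, hg]
    rw [h1]
    apply key
    calc (∏ j, g j ^ (e j : ℕ)).totalDegree
        ≤ ∑ j, (g j ^ (e j : ℕ)).totalDegree := totalDegree_finset_prod _ _
      _ ≤ ∑ _j : Fin (N + 1), M * d := by
          apply Finset.sum_le_sum
          intro j _
          calc (g j ^ (e j : ℕ)).totalDegree ≤ (e j : ℕ) * (g j).totalDegree :=
                totalDegree_pow _ _
            _ ≤ M * d := by
                apply Nat.mul_le_mul
                · exact Nat.lt_succ_iff.mp (e j).2
                · rw [hd]
                  exact Finset.le_sup (f := fun i => (g i).totalDegree) (Finset.mem_univ j)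
      _ = (N + 1) * (M * d) := by
          rw [Finset.sum_const, Finset.card_univ, Fintype.card_fin, smul_eq_mul]
      _ = D := rfl
  have hFli : LinearIndependent K F := by
    have hfinj : Function.Injective
        (fun e : Fin (N + 1) → Fin (M + 1) =>
          (Finsupp.equivFunOnFinite.symm fun i => ((e i : ℕ))) : _ → (Fin (N + 1) →₀ ℕ)) := by
      intro e e' h
      funext i
      have := congrArg (fun β : Fin (N + 1) →₀ ℕ => β i) h
      simp only [Finsupp.coe_equivFunOnFinite_symm] at this
      exact Fin.ext this
    have h1 := ((MvPolynomial.basisMonomials (Fin (N + 1)) K).linearIndependent).comp _ hfinj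
    rw [MvPolynomial.coe_basisMonomials] at h1
    have h2 := h1.map' (aeval (R := K) w).toLinearMap
      (LinearMap.ker_eq_bot.mpr (algebraicIndependent_iff_injective_aeval.mp hw))
    exact h2
  have hcard : (Cardinal.mk (Fin (N + 1) → Fin (M + 1))) ≤ Fintype.card (G : Set A) := by
    apply linearIndependent_le_span' F hFli
    rintro _ ⟨e, rfl⟩
    exact hFmem e
  have hcard2 : (M + 1) ^ (N + 1) ≤ (D + 1) ^ N := by
    have h1 : Fintype.card (Fin (N + 1) → Fin (M + 1)) ≤ Fintype.card (G : Set A) := by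
      rw [Cardinal.mk_fintype] at hcard
      exact_mod_cast hcard
    have h2 : Fintype.card (G : Set A) = G.card := Fintype.card_coe G
    have h3 : G.card ≤ (D + 1) ^ N := by
      calc G.card ≤ Fintype.card (Fin N → Fin (D + 1)) := Finset.card_image_le.trans (by simp)
        _ = (D + 1) ^ N := by simp [Fintype.card_fun]
    have h4 : Fintype.card (Fin (N + 1) → Fin (M + 1)) = (M + 1) ^ (N + 1) := by
      simp [Fintype.card_fun]
    omega
  have hM1 : 1 ≤ M := Nat.one_le_pow _ _ (by omega)
  have h1 : D + 1 ≤ Cn * M := by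
    calc D + 1 = (N + 1) * (M * d) + 1 := rfl
      _ ≤ (N + 1) * (M * d) + M := by omega
      _ = ((N + 1) * d + 1) * M := by ring
      _ = Cn * M := rfl
  have h2 : (D + 1) ^ N ≤ M ^ (N + 1) := by
    calc (D + 1) ^ N ≤ (Cn * M) ^ N := Nat.pow_le_pow_left h1 N
      _ = Cn ^ N * M ^ N := mul_pow _ _ _
      _ = M * M ^ N := by rw [hM]
      _ = M ^ (N + 1) := by ring
  have h3 : M ^ (N + 1) < (M + 1) ^ (N + 1) :=
    Nat.pow_lt_pow_left (Nat.lt_succ_self M) (Nat.succ_ne_zero N)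
  omega

/-- From a chain of primes of length `r` one gets `r` algebraically independent elements in the
quotient by any prime below the chain. -/
theorem ARL.exists_algIndep_of_chain (K : Type*) [Field K] :
    ∀ (r : ℕ) {A : Type u} [CommRing A] [Algebra K A]
      (p : LTSeries (PrimeSpectrum A)) (P : PrimeSpectrum A), P ≤ p.head → p.length = r →
      ∃ w : Fin r → A ⧸ P.asIdeal, AlgebraicIndependent K w := by
  intro r
  induction r with
  | zero =>
    intro A _ _ p P _ _
    haveI : Nontrivial (A ⧸ P.asIdeal) := by
      have := (Ideal.Quotient.isDomain P.asIdeal)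
      infer_instance
    exact ⟨fun i => i.elim0, algebraicIndependent_empty_type⟩
  | succ r ih =>
    intro A _ _ p P hP hp
    have hlen : p.length ≠ 0 := by omega
    have htl : (p.tail hlen).length = r := by
      simp only [RelSeries.tail_length]; omega
    have hlt : p.head < p.toFun 1 := by
      have hstep := p.step ⟨0, by omega⟩
      have e2 : (⟨0, by omega⟩ : Fin p.length).succ = (1 : Fin (p.length + 1)) := by
        apply Fin.ext
        show (1 : ℕ) = _
        rw [Fin.val_one']
        rw [Nat.mod_eq_of_lt (by omega)]
      rw [e2] at hstep
      exact hstep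
    have hPle : (p.toFun 1) ≤ (p.tail hlen).head := le_of_eq (RelSeries.head_tail p hlen).symm
    obtain ⟨w, hw⟩ := ih (p.tail hlen) (p.toFun 1) hPle htl
    have hle : P.asIdeal ≤ (p.toFun 1).asIdeal := le_of_lt (lt_of_le_of_lt hP hlt)
    let φ : A ⧸ P.asIdeal →ₐ[K] A ⧸ (p.toFun 1).asIdeal :=
      Ideal.Quotient.liftₐ P.asIdeal (Ideal.Quotient.mkₐ K (p.toFun 1).asIdeal)
        (fun a ha => by
          rw [Ideal.Quotient.mkₐ_eq_mk, Ideal.Quotient.eq_zero_iff_mem]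
          exact hle ha)
    have hφmk : ∀ a : A, φ (Ideal.Quotient.mk P.asIdeal a)
        = Ideal.Quotient.mk (p.toFun 1).asIdeal a := by
      intro a
      simp [φ, Ideal.Quotient.liftₐ_apply, Ideal.Quotient.lift_mk]
      rfl
    have hφsurj : Function.Surjective φ := by
      intro b
      obtain ⟨a, rfl⟩ := Ideal.Quotient.mk_surjective b
      exact ⟨Ideal.Quotient.mk P.asIdeal a, hφmk a⟩
    have hu : ∀ k, ∃ a, φ a = w k := fun k => hφsurj (w k)
    choose u huu using hu
    have hcomp : ⇑φ ∘ u = w := funext huu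
    have hltP : P.asIdeal < (p.toFun 1).asIdeal := lt_of_le_of_lt hP hlt
    obtain ⟨x, hx1, hx0⟩ := SetLike.exists_of_lt hltP
    have hf0 : Ideal.Quotient.mk P.asIdeal x ≠ 0 := by
      rw [Ne, Ideal.Quotient.eq_zero_iff_mem]; exact hx0
    have hfφ : φ (Ideal.Quotient.mk P.asIdeal x) = 0 := by
      rw [hφmk, Ideal.Quotient.eq_zero_iff_mem]; exact hx1
    haveI : IsDomain (A ⧸ P.asIdeal) := Ideal.Quotient.isDomain P.asIdeal
    have hopt := ARL.algIndep_option φ u (by rw [hcomp]; exact hw)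
      (Ideal.Quotient.mk P.asIdeal x) hf0 hfφ
    exact ⟨_, (algebraicIndependent_equiv (_root_.finSuccEquiv r)).2 hopt⟩

/-- Krull dimension bound via generation of all quotients by primes. -/
theorem ARL.ringKrullDim_le_of_quotients_generated (K : Type*) [Field K] {A : Type u} [CommRing A]
    [Algebra K A] {N : ℕ}
    (hgen : ∀ P : PrimeSpectrum A, ∃ v : Fin N → A ⧸ P.asIdeal,
      Algebra.adjoin K (Set.range v) = ⊤) :
    ringKrullDim A ≤ N := by
  rw [ringKrullDim, Order.krullDim]
  apply iSup_le
  intro p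
  suffices h : p.length ≤ N by exact_mod_cast h
  by_contra hlen
  push_neg at hlen
  obtain ⟨w, hw⟩ := ARL.exists_algIndep_of_chain K p.length p p.head le_rfl rfl
  obtain ⟨v, hv⟩ := hgen p.head
  exact ARL.not_algIndep_succ v hv (w ∘ Fin.castLE (by omega))
    (hw.comp _ (Fin.castLE_injective _))

end AlgIndepAux

/-! ### Combinatorics of monomial ideals -/

theorem ARL.apply_le_mdeg {n : ℕ} (α : Fin n →₀ ℕ) (i : Fin n) : α i ≤ mdeg α :=
  ARL.apply_le_fsum α i

theorem ARL.mdeg_single {n : ℕ} (i : Fin n) (d : ℕ) : mdeg (Finsupp.single i d) = d := by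
  simp [mdeg, Finsupp.sum_single_index]

theorem ARL.mdeg_lt_of_le_of_ne {n : ℕ} {β α : Fin n →₀ ℕ} (hle : β ≤ α) (hne : β ≠ α) :
    mdeg β < mdeg α := by
  have hle' := Finsupp.le_def.mp hle
  obtain ⟨i, hi⟩ : ∃ i, β i ≠ α i := by
    by_contra h
    push_neg at h
    exact hne (Finsupp.ext h)
  have hi' : β i < α i := lt_of_le_of_ne (hle' i) hi
  have hsub : β.support ⊆ α.support ∪ β.support := Finset.subset_union_right
  have h1 : mdeg β = ∑ a ∈ α.support ∪ β.support, β a := by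
    rw [mdeg, Finsupp.sum_of_support_subset β hsub _ (fun _ _ => rfl)]
  have h2 : mdeg α = ∑ a ∈ α.support ∪ β.support, α a := by
    rw [mdeg, Finsupp.sum_of_support_subset α Finset.subset_union_left _ (fun _ _ => rfl)]
  rw [h1, h2]
  apply Finset.sum_lt_sum (fun a _ => hle' a)
  refine ⟨i, ?_, hi'⟩
  apply Finset.mem_union_left
  rw [Finsupp.mem_support_iff]
  omega

theorem ARL.exists_minGen {n : ℕ} (S : Set (Fin n →₀ ℕ)) :
    ∀ (k : ℕ) (α : Fin n →₀ ℕ), α ∈ S → mdeg α ≤ k → ∃ γ, MinGen S γ ∧ γ ≤ α := by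
  intro k
  induction k with
  | zero =>
    intro α hα _
    refine ⟨α, ⟨hα, fun β hβ hle => ?_⟩, le_rfl⟩
    by_contra hne
    have := ARL.mdeg_lt_of_le_of_ne hle hne
    omega
  | succ k ih =>
    intro α hα hk
    by_cases hmin : ∀ β ∈ S, β ≤ α → β = α
    · exact ⟨α, ⟨hα, hmin⟩, le_rfl⟩
    · push_neg at hmin
      obtain ⟨β, hβ, hle, hne⟩ := hmin
      have hlt := ARL.mdeg_lt_of_le_of_ne hle hne
      obtain ⟨γ, hγ, hγle⟩ := ih β hβ (by omega)
      exact ⟨γ, hγ, le_trans hγle hle⟩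

/-- From a minimal generator with `γ jj ≠ 0`, powers of strictly earlier variables of the same
degree belong to `S`. -/
theorem ARL.single_mem_of_minGen {n : ℕ} {S : Set (Fin n →₀ ℕ)} (hS : IsAlmostRevLex S)
    {γ : Fin n →₀ ℕ} (hγ : MinGen S γ) {jj : Fin n} (hjj : γ jj ≠ 0) {i : Fin n} (hij : i < jj) :
    Finsupp.single i (mdeg γ) ∈ S := by
  have hjjsupp : jj ∈ γ.support := Finsupp.mem_support_iff.mpr hjj
  have hne : γ.support.Nonempty := ⟨jj, hjjsupp⟩
  set m := γ.support.max' hne with hm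
  have hmsupp : m ∈ γ.support := γ.support.max'_mem hne
  have hjm : jj ≤ m := γ.support.le_max' jj hjjsupp
  have him : i < m := lt_of_lt_of_le hij hjm
  apply hS.2 γ hγ
  · exact ARL.mdeg_single i (mdeg γ)
  · right
    refine ⟨(ARL.mdeg_single i (mdeg γ)).symm, m, ?_, ?_⟩
    · have h1 : Finsupp.single i (mdeg γ) m = 0 := by
        rw [Finsupp.single_apply_eq_zero]
        intro h; omega
      have h2 : γ m ≠ 0 := Finsupp.mem_support_iff.mp hmsupp
      omega
    · intro l hl
      have h1 : γ l = 0 := by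
        by_contra h
        have : l ∈ γ.support := Finsupp.mem_support_iff.mpr h
        have := γ.support.le_max' l this
        rw [← hm] at this
        omega
      have h2 : Finsupp.single i (mdeg γ) l = 0 := by
        rw [Finsupp.single_apply_eq_zero]
        intro h
        subst h
        exact absurd (lt_trans him hl) (lt_irrefl _)
      rw [h1, h2]

/-- Membership in the span of the monomials of a monomial ideal. -/
theorem ARL.mem_monomial_span_iff {K : Type*} [Field K] {n : ℕ} {S : Set (Fin n →₀ ℕ)}
    (hmon : IsMonIdeal S) (g : MvPolynomial (Fin n) K) :
    g ∈ Ideal.span ((fun α => (monomial α (1 : K))) '' S) ↔ ∀ β ∈ g.support, β ∈ S := by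
  classical
  constructor
  · intro hg
    let T : Ideal (MvPolynomial (Fin n) K) :=
      { carrier := {g | ∀ β ∈ g.support, β ∈ S}
        zero_mem' := by intro β hβ; simp at hβ
        add_mem' := by
          intro a b ha hb β hβ
          have := MvPolynomial.support_add (p := a) (q := b) hβ
          rcases Finset.mem_union.mp this with h | h
          · exact ha β h
          · exact hb β h
        smul_mem' := by
          intro c g hg β hβ
          rw [smul_eq_mul] at hβ
          have := MvPolynomial.support_mul c g hβ
          rw [Finset.mem_add] at this
          obtain ⟨a, ha, b, hb, rfl⟩ := this
          have hbS : b ∈ S := hg b hb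
          have := hmon b hbS a
          rwa [add_comm b a] at this }
    have hsub : Ideal.span ((fun α => (monomial α (1 : K))) '' S) ≤ T := by
      rw [Ideal.span_le]
      rintro _ ⟨α, hα, rfl⟩
      intro β hβ
      simp only [MvPolynomial.support_monomial, if_neg (one_ne_zero (α := K))] at hβ
      rw [Finset.mem_singleton] at hβ
      subst hβ
      exact hα
    exact hsub hg
  · intro hsupp
    rw [g.as_sum]
    apply Ideal.sum_mem
    intro β hβ
    have h1 : (monomial β) (coeff β g) = MvPolynomial.C (coeff β g) * monomial β 1 := by
      rw [C_mul_monomial, mul_one]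
    rw [h1]
    exact Ideal.mul_mem_left _ _ (Ideal.subset_span ⟨β, hsupp β hβ, rfl⟩)

/-- Let `J ⊂ R = K[x_1,…,x_n]` be an almost revlex monomial ideal (with set of monomials `S`)
such that `R/J` has Krull dimension `δ`.  Then for every variable `x_j` with
`n - δ + 2 ≤ j ≤ n` (1-based indexing, so 0-based index `j - 1 ≥ n - δ + 1`), `x_j` is not a
zero-divisor on `R/J`. -/
theorem almostRevLex_var_not_zeroDivisor (K : Type*) [Field K] {n : ℕ}
    (S : Set (Fin n →₀ ℕ)) (hS : IsAlmostRevLex S)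
    (I : Ideal (MvPolynomial (Fin n) K))
    (hI : I = Ideal.span ((fun α => (monomial α (1 : K))) '' S))
    (δ : ℕ) (hdim : ringKrullDim (MvPolynomial (Fin n) K ⧸ I) = δ) :
    ∀ j : Fin n, n - δ + 2 ≤ (j : ℕ) + 1 →
      ∀ g : MvPolynomial (Fin n) K, X j * g ∈ I → g ∈ I := by
  classical
  intro j hj g hg
  have hmem_iff : ∀ h : MvPolynomial (Fin n) K, h ∈ I ↔ ∀ β ∈ h.support, β ∈ S := by
    intro h; rw [hI]; exact ARL.mem_monomial_span_iff hS.1 h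
  -- Step 1: no minimal generator involves `x_j`
  have hkey : ∀ γ, MinGen S γ → γ j = 0 := by
    intro γ hγ
    by_contra hγj
    set d := mdeg γ with hd
    have hd0 : d ≠ 0 := by
      have := ARL.apply_le_mdeg γ j
      omega
    have hXpow : ∀ i : Fin n, i < j → (X i : MvPolynomial (Fin n) K) ^ d ∈ I := by
      intro i hij
      rw [X_pow_eq_monomial, hI]
      exact Ideal.subset_span ⟨_, ARL.single_mem_of_minGen hS hγ hγj hij, rfl⟩
    -- dimension bound
    have hgen : ∀ P : PrimeSpectrum (MvPolynomial (Fin n) K ⧸ I),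
        ∃ v : Fin (n - (j : ℕ)) → (MvPolynomial (Fin n) K ⧸ I) ⧸ P.asIdeal,
          Algebra.adjoin K (Set.range v) = ⊤ := by
      intro P
      set Q := (MvPolynomial (Fin n) K ⧸ I) ⧸ P.asIdeal with hQ
      let π : MvPolynomial (Fin n) K →ₐ[K] Q :=
        (Ideal.Quotient.mkₐ K P.asIdeal).comp (Ideal.Quotient.mkₐ K I)
      have hπsurj : Function.Surjective π :=
        (Ideal.Quotient.mkₐ_surjective K _).comp (Ideal.Quotient.mkₐ_surjective K _)
      have hπtop : Algebra.adjoin K (Set.range (⇑π ∘ X)) = ⊤ := by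
        rw [Set.range_comp, ← AlgHom.map_adjoin, MvPolynomial.adjoin_range_X,
          Algebra.map_top]
        rwa [AlgHom.range_eq_top]
      have hjn : (j : ℕ) < n := j.2
      refine ⟨fun k => π (X ⟨(j : ℕ) + (k : ℕ), by omega⟩), ?_⟩
      apply le_antisymm le_top
      rw [← hπtop]
      apply Algebra.adjoin_le
      rintro _ ⟨i, rfl⟩
      by_cases hi : (i : ℕ) < (j : ℕ)
      · -- image of X i is zero
        have hzero : (⇑π ∘ X) i = 0 := by
          haveI : IsDomain Q := Ideal.Quotient.isDomain P.asIdeal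
          have h1 : ((⇑π ∘ X) i) ^ d = 0 := by
            have h2 : π ((X i : MvPolynomial (Fin n) K) ^ d) = 0 := by
              have h3 : (X i : MvPolynomial (Fin n) K) ^ d ∈ I :=
                hXpow i (by rwa [Fin.lt_iff_val_lt_val])
              show (Ideal.Quotient.mkₐ K P.asIdeal) ((Ideal.Quotient.mkₐ K I) _) = 0
              simp only [Ideal.Quotient.mkₐ_eq_mk]
              rw [Ideal.Quotient.eq_zero_iff_mem.mpr h3, map_zero]
            rw [← h2]
            simp [π, map_pow]
          exact pow_eq_zero_iff hd0 |>.mp h1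
        rw [hzero]
        exact Subalgebra.zero_mem _
      · -- X i is one of the generators
        push_neg at hi
        have hik : (i : ℕ) - (j : ℕ) < n - (j : ℕ) := by
          have := i.2
          omega
        apply Algebra.subset_adjoin
        refine ⟨⟨(i : ℕ) - (j : ℕ), hik⟩, ?_⟩
        show π (X (⟨(j : ℕ) + ((i : ℕ) - (j : ℕ)), by omega⟩ : Fin n)) = (⇑π ∘ X) i
        have h5 : (⟨(j : ℕ) + ((i : ℕ) - (j : ℕ)), by omega⟩ : Fin n) = i := by
          apply Fin.ext
          simp
          omega
        rw [h5]
        rfl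
    have hdimle := ARL.ringKrullDim_le_of_quotients_generated K hgen
    rw [hdim] at hdimle
    have hcast : δ ≤ n - (j : ℕ) := by exact_mod_cast hdimle
    have hjn : (j : ℕ) < n := j.2
    omega
  -- Step 2: conclude membership
  rw [hmem_iff] at hg ⊢
  intro β hβ
  have h1 : Finsupp.single j 1 + β ∈ S := by
    apply hg
    rw [MvPolynomial.mem_support_iff, MvPolynomial.coeff_X_mul]
    exact MvPolynomial.mem_support_iff.mp hβ
  obtain ⟨γ, hγ, hle⟩ :=
    ARL.exists_minGen S (mdeg (Finsupp.single j 1 + β)) _ h1 le_rfl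
  have hγj := hkey γ hγ
  have hγβ : γ ≤ β := by
    rw [Finsupp.le_def]
    intro i
    rcases eq_or_ne i j with rfl | hne
    · rw [hγj]; exact Nat.zero_le _
    · have h2 := Finsupp.le_def.mp hle i
      rw [Finsupp.add_apply, Finsupp.single_apply_eq_zero.mpr (fun h => absurd h hne), zero_add]
        at h2
      exact h2
  have hsplit : β = γ + (β - γ) := (add_tsub_cancel_of_le hγβ).symm
  rw [hsplit]
  exact hS.1 γ hγ.1 (β - γ)
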